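/- (Theorem 3.2(ii): L¹ bound of the basic function in the third variable, case ρ ≥ 1) Let θ ∈ ℝ with sin θ ≠ 0 and ρ ≥ 1. Let ψ ∈ L¹(ℝ), let the functions y ↦ (1+|y|^{ρ−1})φ(y) and y ↦ (1+|y|^{ρ−1})χ(y) belong to L¹(ℝ), and let 0 < C_φ = ∫_ℝ |φ̂(ω)|²/|ω| dω < ∞. Then for all u, v ∈ ℝ with u ≠ v, ∫_ℝ |D^α(u,v,w)| dw ≤ C_φ^{−1} · 2^{ρ−1} · |u−v|^{−ρ} · [ ‖φ(x)x^{ρ−1}‖₁ · ‖χ‖₁ + ‖χ(y)y^{ρ−1}‖₁ · ‖φ‖₁ ] · ‖ψ‖₁. -/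

import Mathlib

open MeasureTheory Complex

/-- The fractional wavelet family `φ^α_{a,b}(t) = e^{(-i/2)(t²-b²)cot θ} |a|^{-ρ} φ((t-b)/a)`. -/
noncomputable def fracWav (θ ρ : ℝ) (φ : ℝ → ℂ) (a b t : ℝ) : ℂ :=
  Complex.exp ((-(Complex.I / 2)) * ((t : ℂ) ^ 2 - (b : ℂ) ^ 2) *
      ((Real.cos θ / Real.sin θ : ℝ) : ℂ)) *
    ((|a| ^ (-ρ) : ℝ) : ℂ) * φ ((t - b) / a)

/-- The general novel fractional wavelet transform (GNFrWT). -/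
noncomputable def GNFrWT (θ ρ : ℝ) (φ h : ℝ → ℂ) (a b : ℝ) : ℂ :=
  ∫ t : ℝ, h t * (starRingEnd ℂ) (fracWav θ ρ φ a b t)

/-- The admissibility constant `C_φ = ∫ |φ̂(ω)|²/|ω| dω`. -/
noncomputable def admConst (φ : ℝ → ℂ) : ℝ :=
  ∫ ω : ℝ, ‖FourierTransform.fourier φ ω‖ ^ 2 / |ω|

/-- The basic function `D^α(u,v,w)` associated with the GNFrWT. -/
noncomputable def basicD (θ ρ : ℝ) (ψ χ φ : ℝ → ℂ) (u v w : ℝ) : ℂ :=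
  ((admConst φ : ℝ) : ℂ)⁻¹ *
    ∫ a in Set.Ioi (0 : ℝ), ∫ b : ℝ,
      (starRingEnd ℂ) (fracWav θ ρ ψ a b w) * (starRingEnd ℂ) (fracWav θ ρ χ a b v) *
        fracWav θ ρ φ a b u * ((|a| ^ (2 * ρ - 3) : ℝ) : ℂ)

/-- The convolution `#^α` associated with the GNFrWT. -/
noncomputable def convAlpha (θ ρ : ℝ) (ψ χ φ h g : ℝ → ℂ) (u : ℝ) : ℂ :=
  ∫ w : ℝ, ∫ v : ℝ, basicD θ ρ ψ χ φ u v w * h w * g v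

open ENNReal

section Aux

lemma norm_fracWav (θ ρ : ℝ) (f : ℝ → ℂ) (a b t : ℝ) :
    ‖fracWav θ ρ f a b t‖ = |a| ^ (-ρ) * ‖f ((t - b) / a)‖ := by
  unfold fracWav
  have h0 : ((-(Complex.I / 2)) * ((t : ℂ) ^ 2 - (b : ℂ) ^ 2) *
      ((Real.cos θ / Real.sin θ : ℝ) : ℂ))
      = ((-(t ^ 2 - b ^ 2) * (Real.cos θ / Real.sin θ) / 2 : ℝ) : ℂ) * Complex.I := by
    push_cast; ring
  rw [norm_mul, norm_mul, h0, Complex.norm_exp_ofReal_mul_I, one_mul,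
    Complex.norm_real, Real.norm_eq_abs,
    _root_.abs_of_nonneg (Real.rpow_nonneg (abs_nonneg a) _)]

/-- Affine substitution for the Lebesgue integral of an arbitrary `ℝ≥0∞`-valued function. -/
lemma lintegral_affine (a c : ℝ) (ha : a ≠ 0) (g : ℝ → ℝ≥0∞) :
    ∫⁻ t : ℝ, g ((t - c) / a) = ENNReal.ofReal |a| * ∫⁻ x : ℝ, g x := by
  have hf' : ∀ x ∈ (Set.univ : Set ℝ), HasFDerivWithinAt (fun t : ℝ => (t - c) / a)
      ((1 : ℝ →L[ℝ] ℝ).smulRight a⁻¹) Set.univ x := by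
    intro x _
    have : HasDerivAt (fun t : ℝ => (t - c) / a) a⁻¹ x := by
      simpa using (((hasDerivAt_id x).sub_const c).div_const a)
    exact this.hasFDerivAt.hasFDerivWithinAt
  have hinj : Set.InjOn (fun t : ℝ => (t - c) / a) Set.univ := by
    intro x _ y _ h
    field_simp at h; linarith
  have himg : (fun t : ℝ => (t - c) / a) '' Set.univ = Set.univ := by
    apply Set.eq_univ_of_forall
    intro z
    exact ⟨z * a + c, trivial, by field_simp; ring⟩
  have := MeasureTheory.lintegral_image_eq_lintegral_abs_det_fderiv_mul volume
    MeasurableSet.univ hf' hinj g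
  rw [himg] at this
  simp only [Measure.restrict_univ, ContinuousLinearMap.det_smulRight,
    ContinuousLinearMap.one_apply, one_mul] at this
  rw [this, lintegral_const_mul' _ _ ENNReal.ofReal_ne_top, ← mul_assoc,
    ← ENNReal.ofReal_mul (abs_nonneg a), abs_inv]
  rw [mul_inv_cancel₀ (by positivity : |a| ≠ 0)]
  simp

lemma jac_real (ρ : ℝ) {c a : ℝ} (hc : c ≠ 0) (ha : 0 < a) :
    |(-c / a ^ 2)| * (|c| ^ (-ρ) * |c / a| ^ (ρ - 1)) = a ^ (-ρ - 1) := by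
  have hx : (0:ℝ) < |c| := abs_pos.mpr hc
  have h1 : |(-c / a ^ 2)| = |c| / a ^ 2 := by
    rw [abs_div, abs_neg]; congr 1; exact abs_of_pos (by positivity)
  have h2 : |c / a| = |c| / a := by rw [abs_div, abs_of_pos ha]
  rw [h1, h2, Real.div_rpow hx.le ha.le]
  have e1 : |c| / a ^ 2 * (|c| ^ (-ρ) * (|c| ^ (ρ - 1) / a ^ (ρ - 1))) =
      (|c| * |c| ^ (-ρ) * |c| ^ (ρ - 1)) / (a ^ (2:ℕ) * a ^ (ρ - 1)) := by
    ring
  rw [e1]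
  nth_rewrite 1 [← Real.rpow_one |c|]
  rw [← Real.rpow_natCast a 2, ← Real.rpow_add hx, ← Real.rpow_add hx, ← Real.rpow_add ha,
    show (1 + -ρ + (ρ - 1) : ℝ) = 0 by ring, Real.rpow_zero,
    show (((2:ℕ):ℝ) + (ρ - 1)) = (ρ + 1) by push_cast; ring,
    show (-ρ - 1 : ℝ) = -(ρ + 1) by ring, Real.rpow_neg ha.le, one_div]

lemma lintegral_Ioi_subst (ρ : ℝ) {c : ℝ} (y : ℝ) (hc : c ≠ 0) (g : ℝ → ℝ≥0∞) :
    ∫⁻ a in Set.Ioi (0:ℝ), ENNReal.ofReal (a ^ (-ρ - 1)) * g (y + c / a) ≤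
      ENNReal.ofReal (|c| ^ (-ρ)) *
        ∫⁻ z : ℝ, ENNReal.ofReal (|z - y| ^ (ρ - 1)) * g z := by
  set f : ℝ → ℝ := fun a => y + c / a with hf
  have hf' : ∀ a ∈ Set.Ioi (0:ℝ), HasFDerivWithinAt f
      ((1 : ℝ →L[ℝ] ℝ).smulRight (-c / a ^ 2)) (Set.Ioi 0) a := by
    intro a ha
    have h : HasDerivAt f (-c / a ^ 2) a := by
      have := ((hasDerivAt_inv (ne_of_gt (Set.mem_Ioi.mp ha))).const_mul c).const_add y
      have e : f = fun x => y + c * x⁻¹ := by funext x; simp [hf, div_eq_mul_inv]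
      rw [e, show -c / a ^ 2 = c * -(a ^ 2)⁻¹ by ring]; exact this
    exact h.hasFDerivAt.hasFDerivWithinAt
  have hinj : Set.InjOn f (Set.Ioi 0) := by
    intro a₁ h₁ a₂ h₂ h
    have h' : c / a₁ = c / a₂ := by
      have := h; simp only [hf] at this; linarith
    rw [div_eq_div_iff (ne_of_gt (Set.mem_Ioi.mp h₁)) (ne_of_gt (Set.mem_Ioi.mp h₂))] at h'
    exact mul_left_cancel₀ hc h'.symm
  have key := MeasureTheory.lintegral_image_eq_lintegral_abs_det_fderiv_mul volume
    measurableSet_Ioi hf' hinj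
    (fun z => ENNReal.ofReal (|c| ^ (-ρ) * |z - y| ^ (ρ - 1)) * g z)
  simp only [ContinuousLinearMap.det_smulRight, ContinuousLinearMap.one_apply, one_mul] at key
  have heq : ∫⁻ a in Set.Ioi (0:ℝ), ENNReal.ofReal |(-c / a ^ 2)| *
      (ENNReal.ofReal (|c| ^ (-ρ) * |f a - y| ^ (ρ - 1)) * g (f a)) =
      ∫⁻ a in Set.Ioi (0:ℝ), ENNReal.ofReal (a ^ (-ρ - 1)) * g (y + c / a) := by
    apply setLIntegral_congr_fun measurableSet_Ioi
    intro a ha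
    have ha' : (0:ℝ) < a := ha
    have hfa : f a - y = c / a := by simp [hf]
    beta_reduce
    rw [hfa, ← mul_assoc, ← ENNReal.ofReal_mul (abs_nonneg _), jac_real ρ hc ha']
  calc ∫⁻ a in Set.Ioi (0:ℝ), ENNReal.ofReal (a ^ (-ρ - 1)) * g (y + c / a)
      = ∫⁻ z in f '' Set.Ioi 0, ENNReal.ofReal (|c| ^ (-ρ) * |z - y| ^ (ρ - 1)) * g z := by
        rw [key, ← heq]
    _ ≤ ∫⁻ z : ℝ, ENNReal.ofReal (|c| ^ (-ρ) * |z - y| ^ (ρ - 1)) * g z :=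
        lintegral_mono' Measure.restrict_le_self le_rfl
    _ = ENNReal.ofReal (|c| ^ (-ρ)) * ∫⁻ z : ℝ, ENNReal.ofReal (|z - y| ^ (ρ - 1)) * g z := by
        rw [← lintegral_const_mul' _ _ ENNReal.ofReal_ne_top]
        congr 1; funext z
        rw [← mul_assoc, ← ENNReal.ofReal_mul (Real.rpow_nonneg (abs_nonneg _) _)]

lemma null_preimage_affine {a : ℝ} (ha : a ≠ 0) (r : ℝ) {N : Set ℝ}
    (hN : MeasurableSet N) (h0 : volume N = 0) :
    volume ((fun b : ℝ => (r - b) / a) ⁻¹' N) = 0 := by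
  have hm : Measurable fun b : ℝ => (r - b) / a := by fun_prop
  have hmeas : MeasurableSet ((fun b : ℝ => (r - b) / a) ⁻¹' N) := hm hN
  rw [← lintegral_indicator_one hmeas]
  have hpt : ∀ b : ℝ, ((fun b : ℝ => (r - b) / a) ⁻¹' N).indicator
      (1 : ℝ → ℝ≥0∞) b = N.indicator (1 : ℝ → ℝ≥0∞) ((b - r) / (-a)) := by
    intro b
    have hbr : (b - r) / (-a) = (r - b) / a := by
      rw [div_neg, ← neg_div, neg_sub]
    rw [hbr]
    by_cases hb : (r - b) / a ∈ N <;> simp [Set.indicator, hb]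
  rw [show (∫⁻ b : ℝ, ((fun b : ℝ => (r - b) / a) ⁻¹' N).indicator
      (1 : ℝ → ℝ≥0∞) b) = ∫⁻ b : ℝ, N.indicator (1 : ℝ → ℝ≥0∞) ((b - r) / (-a))
      from lintegral_congr hpt,
    lintegral_affine (-a) r (neg_ne_zero.mpr ha), lintegral_indicator_one hN, h0, mul_zero]

lemma ae_comp_affine {f g : ℝ → ℂ} (h : f =ᵐ[volume] g) {a : ℝ} (ha : a ≠ 0) (r : ℝ) :
    (fun b : ℝ => f ((r - b) / a)) =ᵐ[volume] fun b : ℝ => g ((r - b) / a) := by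
  rw [Filter.EventuallyEq, ae_iff] at h ⊢
  obtain ⟨N, hsub, hNm, hN0⟩ := exists_measurable_superset_of_null h
  refine measure_mono_null ?_ (null_preimage_affine ha r hNm hN0)
  intro b hb
  exact hsub hb

lemma rpow_sub_bound {ρ : ℝ} (hρ : 1 ≤ ρ) (y z : ℝ) :
    |z - y| ^ (ρ - 1) ≤ 2 ^ (ρ - 1) * (|y| ^ (ρ - 1) + |z| ^ (ρ - 1)) := by
  have h0 : (0:ℝ) ≤ ρ - 1 := by linarith
  set m : ℝ := max (|y|) (|z|) with hm
  have hmnn : 0 ≤ m := le_max_of_le_left (abs_nonneg _)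
  have h1 : |z - y| ≤ 2 * m := by
    have h1a : |z - y| ≤ |z| + |y| := by
      rw [sub_eq_add_neg]
      refine (abs_add_le _ _).trans ?_
      rw [abs_neg]
    have hy : |y| ≤ m := le_max_left _ _
    have hz : |z| ≤ m := le_max_right _ _
    linarith
  have h2 : |z - y| ^ (ρ - 1) ≤ (2 * m) ^ (ρ - 1) :=
    Real.rpow_le_rpow (abs_nonneg _) h1 h0
  have h3 : (2 * m) ^ (ρ - 1) = 2 ^ (ρ - 1) * m ^ (ρ - 1) :=
    Real.mul_rpow (by norm_num) hmnn
  have h4 : m ^ (ρ - 1) ≤ |y| ^ (ρ - 1) + |z| ^ (ρ - 1) := by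
    rcases le_total (|y|) (|z|) with hle | hle
    · rw [hm, max_eq_right hle]
      have : (0:ℝ) ≤ |y| ^ (ρ - 1) := Real.rpow_nonneg (abs_nonneg _) _
      linarith
    · rw [hm, max_eq_left hle]
      have : (0:ℝ) ≤ |z| ^ (ρ - 1) := Real.rpow_nonneg (abs_nonneg _) _
      linarith
  have h5 : 2 ^ (ρ - 1) * m ^ (ρ - 1) ≤ 2 ^ (ρ - 1) * (|y| ^ (ρ - 1) + |z| ^ (ρ - 1)) := by
    have : (0:ℝ) ≤ 2 ^ (ρ - 1) := Real.rpow_nonneg (by norm_num) _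
    nlinarith
  linarith [h3 ▸ h2]

/-- Pointwise norm of the integrand of `basicD`, for `a > 0`. -/
lemma enorm_F (θ ρ : ℝ) (ψ χ φ : ℝ → ℂ) {a : ℝ} (ha : 0 < a) (b u v w : ℝ) :
    (‖(starRingEnd ℂ) (fracWav θ ρ ψ a b w) * (starRingEnd ℂ) (fracWav θ ρ χ a b v) *
        fracWav θ ρ φ a b u * ((|a| ^ (2 * ρ - 3) : ℝ) : ℂ)‖₊ : ℝ≥0∞) =
    (ENNReal.ofReal (a ^ (-ρ - 3)) * ‖χ ((v - b) / a)‖₊ * ‖φ ((u - b) / a)‖₊) *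
      ‖ψ ((w - b) / a)‖₊ := by
  have habs : |a| = a := abs_of_pos ha
  have hnorm : ‖(starRingEnd ℂ) (fracWav θ ρ ψ a b w) * (starRingEnd ℂ) (fracWav θ ρ χ a b v) *
      fracWav θ ρ φ a b u * ((|a| ^ (2 * ρ - 3) : ℝ) : ℂ)‖
      = (a ^ (-ρ - 3) * ‖χ ((v - b) / a)‖ * ‖φ ((u - b) / a)‖) * ‖ψ ((w - b) / a)‖ := by
    rw [norm_mul, norm_mul, norm_mul, RCLike.norm_conj, RCLike.norm_conj,
      Complex.norm_real, Real.norm_eq_abs,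
      _root_.abs_of_nonneg (Real.rpow_nonneg (abs_nonneg a) _),
      norm_fracWav, norm_fracWav, norm_fracWav, habs]
    have hpow : a ^ (-ρ) * a ^ (-ρ) * a ^ (-ρ) * a ^ (2 * ρ - 3) = a ^ (-ρ - 3) := by
      rw [← Real.rpow_add ha, ← Real.rpow_add ha, ← Real.rpow_add ha]
      congr 1; ring
    calc a ^ (-ρ) * ‖ψ ((w - b) / a)‖ * (a ^ (-ρ) * ‖χ ((v - b) / a)‖) *
          (a ^ (-ρ) * ‖φ ((u - b) / a)‖) * a ^ (2 * ρ - 3)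
        = (a ^ (-ρ) * a ^ (-ρ) * a ^ (-ρ) * a ^ (2 * ρ - 3)) *
            ‖χ ((v - b) / a)‖ * ‖φ ((u - b) / a)‖ * ‖ψ ((w - b) / a)‖ := by ring
      _ = (a ^ (-ρ - 3) * ‖χ ((v - b) / a)‖ * ‖φ ((u - b) / a)‖) * ‖ψ ((w - b) / a)‖ := by
          rw [hpow]
  rw [← enorm_eq_nnnorm, ← ofReal_norm, hnorm, ENNReal.ofReal_mul (by positivity),
    ENNReal.ofReal_mul (by positivity), ENNReal.ofReal_mul (Real.rpow_nonneg ha.le _),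
    ofReal_norm, enorm_eq_nnnorm, ofReal_norm, enorm_eq_nnnorm, ofReal_norm, enorm_eq_nnnorm]

end Aux


/-- The heart of the estimate: bound on the triple Lebesgue integral. -/
lemma core_bound {ρ : ℝ} (hρ : 1 ≤ ρ) (ψ' χ' φ' : ℝ → ℂ)
    (mψ : Measurable ψ') (mχ : Measurable χ') (mφ : Measurable φ')
    (u v : ℝ) (hc : v - u ≠ 0)
    (fNψ : (∫⁻ x : ℝ, (‖ψ' x‖₊ : ℝ≥0∞)) ≠ ⊤)
    (fNχ : (∫⁻ x : ℝ, (‖χ' x‖₊ : ℝ≥0∞)) ≠ ⊤)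
    (fMχ : (∫⁻ x : ℝ, ENNReal.ofReal (|x| ^ (ρ - 1)) * (‖χ' x‖₊ : ℝ≥0∞)) ≠ ⊤) :
    (∫⁻ w : ℝ, ∫⁻ a in Set.Ioi (0:ℝ), ∫⁻ b : ℝ,
        ((ENNReal.ofReal (a ^ (-ρ - 3)) * ‖χ' ((v - b) / a)‖₊ * ‖φ' ((u - b) / a)‖₊) *
          ‖ψ' ((w - b) / a)‖₊)) ≤
      ENNReal.ofReal (|v - u| ^ (-ρ)) * ENNReal.ofReal (2 ^ (ρ - 1)) *
        ((∫⁻ x : ℝ, ENNReal.ofReal (|x| ^ (ρ - 1)) * (‖φ' x‖₊ : ℝ≥0∞)) *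
            (∫⁻ x : ℝ, (‖χ' x‖₊ : ℝ≥0∞)) +
          (∫⁻ x : ℝ, ENNReal.ofReal (|x| ^ (ρ - 1)) * (‖χ' x‖₊ : ℝ≥0∞)) *
            (∫⁻ x : ℝ, (‖φ' x‖₊ : ℝ≥0∞))) *
        (∫⁻ x : ℝ, (‖ψ' x‖₊ : ℝ≥0∞)) := by
  set c : ℝ := v - u with hcdef
  set Nψ : ℝ≥0∞ := ∫⁻ x : ℝ, (‖ψ' x‖₊ : ℝ≥0∞) with hNψdef
  set Nφ : ℝ≥0∞ := ∫⁻ x : ℝ, (‖φ' x‖₊ : ℝ≥0∞) with hNφdef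
  set Nχ : ℝ≥0∞ := ∫⁻ x : ℝ, (‖χ' x‖₊ : ℝ≥0∞) with hNχdef
  set Mφ : ℝ≥0∞ := ∫⁻ x : ℝ, ENNReal.ofReal (|x| ^ (ρ - 1)) * (‖φ' x‖₊ : ℝ≥0∞) with hMφdef
  set Mχ : ℝ≥0∞ := ∫⁻ x : ℝ, ENNReal.ofReal (|x| ^ (ρ - 1)) * (‖χ' x‖₊ : ℝ≥0∞) with hMχdef
  -- swap the `w` integral inside
  have s1 : (∫⁻ w : ℝ, ∫⁻ a in Set.Ioi (0:ℝ), ∫⁻ b : ℝ,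
        ((ENNReal.ofReal (a ^ (-ρ - 3)) * ‖χ' ((v - b) / a)‖₊ * ‖φ' ((u - b) / a)‖₊) *
          ‖ψ' ((w - b) / a)‖₊)) =
      ∫⁻ a in Set.Ioi (0:ℝ), ∫⁻ w : ℝ, ∫⁻ b : ℝ,
        ((ENNReal.ofReal (a ^ (-ρ - 3)) * ‖χ' ((v - b) / a)‖₊ * ‖φ' ((u - b) / a)‖₊) *
          ‖ψ' ((w - b) / a)‖₊) := by
    apply lintegral_lintegral_swap
    apply Measurable.aemeasurable
    exact (show Measurable (fun q : (ℝ × ℝ) × ℝ =>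
      ((ENNReal.ofReal (q.1.2 ^ (-ρ - 3)) * ‖χ' ((v - q.2) / q.1.2)‖₊ *
          ‖φ' ((u - q.2) / q.1.2)‖₊) * ‖ψ' ((q.1.1 - q.2) / q.1.2)‖₊)) by fun_prop
      ).lintegral_prod_right'
  have s2 : ∀ a : ℝ, (∫⁻ w : ℝ, ∫⁻ b : ℝ,
        ((ENNReal.ofReal (a ^ (-ρ - 3)) * ‖χ' ((v - b) / a)‖₊ * ‖φ' ((u - b) / a)‖₊) *
          ‖ψ' ((w - b) / a)‖₊)) =
      ∫⁻ b : ℝ, ∫⁻ w : ℝ,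
        ((ENNReal.ofReal (a ^ (-ρ - 3)) * ‖χ' ((v - b) / a)‖₊ * ‖φ' ((u - b) / a)‖₊) *
          ‖ψ' ((w - b) / a)‖₊) := by
    intro a
    apply lintegral_lintegral_swap
    apply Measurable.aemeasurable
    exact show Measurable (fun p : ℝ × ℝ =>
      ((ENNReal.ofReal (a ^ (-ρ - 3)) * ‖χ' ((v - p.2) / a)‖₊ * ‖φ' ((u - p.2) / a)‖₊) *
        ‖ψ' ((p.1 - p.2) / a)‖₊)) by fun_prop
  -- compute the inner double integral for fixed `a > 0`
  have inner_comp : ∀ a ∈ Set.Ioi (0:ℝ), (∫⁻ b : ℝ, ∫⁻ w : ℝ,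
        ((ENNReal.ofReal (a ^ (-ρ - 3)) * ‖χ' ((v - b) / a)‖₊ * ‖φ' ((u - b) / a)‖₊) *
          ‖ψ' ((w - b) / a)‖₊)) =
      ENNReal.ofReal (a ^ (-ρ - 1)) *
        (∫⁻ y : ℝ, (‖φ' y‖₊ : ℝ≥0∞) * ‖χ' (y + c / a)‖₊) * Nψ := by
    intro a ha
    have ha' : (0:ℝ) < a := ha
    have h1 : ∀ b : ℝ, (∫⁻ w : ℝ,
        ((ENNReal.ofReal (a ^ (-ρ - 3)) * ‖χ' ((v - b) / a)‖₊ * ‖φ' ((u - b) / a)‖₊) *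
          ‖ψ' ((w - b) / a)‖₊)) =
        (ENNReal.ofReal (a ^ (-ρ - 3)) * ‖χ' ((v - b) / a)‖₊ * ‖φ' ((u - b) / a)‖₊) *
          (ENNReal.ofReal a * Nψ) := by
      intro b
      have hK : ENNReal.ofReal (a ^ (-ρ - 3)) * (‖χ' ((v - b) / a)‖₊ : ℝ≥0∞) *
          (‖φ' ((u - b) / a)‖₊ : ℝ≥0∞) ≠ ⊤ :=
        ENNReal.mul_ne_top (ENNReal.mul_ne_top ENNReal.ofReal_ne_top ENNReal.coe_ne_top)
          ENNReal.coe_ne_top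
      rw [lintegral_const_mul' _ _ hK,
        lintegral_affine a b ha'.ne' (fun x => (‖ψ' x‖₊ : ℝ≥0∞)), abs_of_pos ha']
    rw [lintegral_congr h1,
      lintegral_mul_const' _ _ (ENNReal.mul_ne_top ENNReal.ofReal_ne_top fNψ)]
    have h2 : ∀ b : ℝ, ENNReal.ofReal (a ^ (-ρ - 3)) * (‖χ' ((v - b) / a)‖₊ : ℝ≥0∞) *
        ‖φ' ((u - b) / a)‖₊
        = ENNReal.ofReal (a ^ (-ρ - 3)) *
          ((fun y => (‖φ' y‖₊ : ℝ≥0∞) * ‖χ' (y + c / a)‖₊) ((b - u) / (-a))) := by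
      intro b
      have e1 : (b - u) / (-a) = (u - b) / a := by rw [div_neg, ← neg_div, neg_sub]
      have e2 : (u - b) / a + c / a = (v - b) / a := by
        rw [← add_div, hcdef]; congr 1; ring
      simp only [e1, e2]
      ring
    rw [lintegral_congr h2, lintegral_const_mul' _ _ ENNReal.ofReal_ne_top,
      lintegral_affine (-a) u (neg_ne_zero.mpr ha'.ne')
        (fun y => (‖φ' y‖₊ : ℝ≥0∞) * ‖χ' (y + c / a)‖₊),
      abs_neg, abs_of_pos ha']
    have hpow : ENNReal.ofReal (a ^ (-ρ - 3)) * ENNReal.ofReal a * ENNReal.ofReal a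
        = ENNReal.ofReal (a ^ (-ρ - 1)) := by
      rw [← ENNReal.ofReal_mul (by positivity), ← ENNReal.ofReal_mul (by positivity)]
      congr 1
      have : a ^ (-ρ - 3) * a * a = a ^ (-ρ - 3) * a ^ (((2:ℕ)):ℝ) := by
        rw [Real.rpow_natCast]; ring
      rw [this, ← Real.rpow_add ha']
      congr 1
      push_cast; ring
    rw [← hpow]; ring
  have s3 : (∫⁻ a in Set.Ioi (0:ℝ), ∫⁻ b : ℝ, ∫⁻ w : ℝ,
        ((ENNReal.ofReal (a ^ (-ρ - 3)) * ‖χ' ((v - b) / a)‖₊ * ‖φ' ((u - b) / a)‖₊) *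
          ‖ψ' ((w - b) / a)‖₊)) =
      (∫⁻ a in Set.Ioi (0:ℝ), ENNReal.ofReal (a ^ (-ρ - 1)) *
        (∫⁻ y : ℝ, (‖φ' y‖₊ : ℝ≥0∞) * ‖χ' (y + c / a)‖₊)) * Nψ := by
    rw [← lintegral_mul_const' _ _ fNψ]
    exact setLIntegral_congr_fun measurableSet_Ioi
      (fun a ha => inner_comp a ha)
  -- bound the `a`-integral
  have inner_a_bound : (∫⁻ a in Set.Ioi (0:ℝ), ENNReal.ofReal (a ^ (-ρ - 1)) *
        (∫⁻ y : ℝ, (‖φ' y‖₊ : ℝ≥0∞) * ‖χ' (y + c / a)‖₊)) ≤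
      ENNReal.ofReal (|c| ^ (-ρ)) * ENNReal.ofReal (2 ^ (ρ - 1)) * (Mφ * Nχ + Mχ * Nφ) := by
    have e : ∀ a : ℝ, ENNReal.ofReal (a ^ (-ρ - 1)) *
        (∫⁻ y : ℝ, (‖φ' y‖₊ : ℝ≥0∞) * ‖χ' (y + c / a)‖₊) =
        ∫⁻ y : ℝ, (‖φ' y‖₊ : ℝ≥0∞) * (ENNReal.ofReal (a ^ (-ρ - 1)) * ‖χ' (y + c / a)‖₊) := by
      intro a
      rw [show (fun y : ℝ => (‖φ' y‖₊ : ℝ≥0∞) * (ENNReal.ofReal (a ^ (-ρ - 1)) *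
          ‖χ' (y + c / a)‖₊)) = fun y : ℝ => ENNReal.ofReal (a ^ (-ρ - 1)) *
          ((‖φ' y‖₊ : ℝ≥0∞) * ‖χ' (y + c / a)‖₊) from funext fun y => by ring,
        lintegral_const_mul' _ _ ENNReal.ofReal_ne_top]
    rw [setLIntegral_congr_fun measurableSet_Ioi
      (fun a _ => e a)]
    have s4 : (∫⁻ a in Set.Ioi (0:ℝ), ∫⁻ y : ℝ, (‖φ' y‖₊ : ℝ≥0∞) *
          (ENNReal.ofReal (a ^ (-ρ - 1)) * ‖χ' (y + c / a)‖₊)) =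
        ∫⁻ y : ℝ, ∫⁻ a in Set.Ioi (0:ℝ), (‖φ' y‖₊ : ℝ≥0∞) *
          (ENNReal.ofReal (a ^ (-ρ - 1)) * ‖χ' (y + c / a)‖₊) := by
      apply lintegral_lintegral_swap
      apply Measurable.aemeasurable
      exact show Measurable (fun p : ℝ × ℝ => (‖φ' p.2‖₊ : ℝ≥0∞) *
        (ENNReal.ofReal (p.1 ^ (-ρ - 1)) * ‖χ' (p.2 + c / p.1)‖₊)) by fun_prop
    rw [s4]
    have step7 : ∀ y : ℝ, (∫⁻ a in Set.Ioi (0:ℝ), (‖φ' y‖₊ : ℝ≥0∞) *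
          (ENNReal.ofReal (a ^ (-ρ - 1)) * ‖χ' (y + c / a)‖₊)) ≤
        (‖φ' y‖₊ : ℝ≥0∞) * (ENNReal.ofReal (|c| ^ (-ρ)) *
          (ENNReal.ofReal (2 ^ (ρ - 1)) * (ENNReal.ofReal (|y| ^ (ρ - 1)) * Nχ + Mχ))) := by
      intro y
      rw [lintegral_const_mul' _ _ ENNReal.coe_ne_top]
      refine mul_le_mul_right ?_ _
      refine le_trans (lintegral_Ioi_subst ρ y hc (fun z => (‖χ' z‖₊ : ℝ≥0∞))) ?_
      refine mul_le_mul_right ?_ _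
      -- ∫⁻ z, ofReal(|z-y|^(ρ-1)) * X z ≤ ofReal(2^(ρ-1)) * (ofReal(|y|^(ρ-1)) * Nχ + Mχ)
      have hpt : ∀ z : ℝ, ENNReal.ofReal (|z - y| ^ (ρ - 1)) * (‖χ' z‖₊ : ℝ≥0∞) ≤
          (ENNReal.ofReal (2 ^ (ρ - 1)) *
            (ENNReal.ofReal (|y| ^ (ρ - 1)) + ENNReal.ofReal (|z| ^ (ρ - 1)))) *
            (‖χ' z‖₊ : ℝ≥0∞) := by
        intro z
        refine mul_le_mul_left ?_ _
        rw [← ENNReal.ofReal_add (Real.rpow_nonneg (abs_nonneg _) _)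
            (Real.rpow_nonneg (abs_nonneg _) _),
          ← ENNReal.ofReal_mul (Real.rpow_nonneg (by norm_num) _)]
        exact ENNReal.ofReal_le_ofReal (rpow_sub_bound hρ y z)
      refine le_trans (lintegral_mono hpt) ?_
      rw [show (fun z : ℝ => (ENNReal.ofReal (2 ^ (ρ - 1)) *
          (ENNReal.ofReal (|y| ^ (ρ - 1)) + ENNReal.ofReal (|z| ^ (ρ - 1)))) *
          (‖χ' z‖₊ : ℝ≥0∞)) = fun z : ℝ => ENNReal.ofReal (2 ^ (ρ - 1)) *
          (ENNReal.ofReal (|y| ^ (ρ - 1)) * (‖χ' z‖₊ : ℝ≥0∞) +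
            ENNReal.ofReal (|z| ^ (ρ - 1)) * (‖χ' z‖₊ : ℝ≥0∞)) from
          funext fun z => by ring,
        lintegral_const_mul' _ _ ENNReal.ofReal_ne_top,
        lintegral_add_left (by fun_prop),
        lintegral_const_mul' _ _ ENNReal.ofReal_ne_top]
    refine le_trans (lintegral_mono step7) ?_
    rw [show (fun y : ℝ => (‖φ' y‖₊ : ℝ≥0∞) * (ENNReal.ofReal (|c| ^ (-ρ)) *
        (ENNReal.ofReal (2 ^ (ρ - 1)) * (ENNReal.ofReal (|y| ^ (ρ - 1)) * Nχ + Mχ)))) =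
        fun y : ℝ => (ENNReal.ofReal (|c| ^ (-ρ)) * ENNReal.ofReal (2 ^ (ρ - 1))) *
          ((ENNReal.ofReal (|y| ^ (ρ - 1)) * (‖φ' y‖₊ : ℝ≥0∞)) * Nχ +
            (‖φ' y‖₊ : ℝ≥0∞) * Mχ) from funext fun y => by ring,
      lintegral_const_mul' _ _
        (ENNReal.mul_ne_top ENNReal.ofReal_ne_top ENNReal.ofReal_ne_top),
      lintegral_add_left (by fun_prop),
      lintegral_mul_const' _ _ fNχ, lintegral_mul_const' _ _ fMχ]
    exact le_of_eq (by ring)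
  -- put everything together
  calc (∫⁻ w : ℝ, ∫⁻ a in Set.Ioi (0:ℝ), ∫⁻ b : ℝ,
        ((ENNReal.ofReal (a ^ (-ρ - 3)) * ‖χ' ((v - b) / a)‖₊ * ‖φ' ((u - b) / a)‖₊) *
          ‖ψ' ((w - b) / a)‖₊))
      = (∫⁻ a in Set.Ioi (0:ℝ), ENNReal.ofReal (a ^ (-ρ - 1)) *
          (∫⁻ y : ℝ, (‖φ' y‖₊ : ℝ≥0∞) * ‖χ' (y + c / a)‖₊)) * Nψ := by
        rw [s1, ← s3]
        exact lintegral_congr fun a => s2 a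
    _ ≤ (ENNReal.ofReal (|c| ^ (-ρ)) * ENNReal.ofReal (2 ^ (ρ - 1)) *
          (Mφ * Nχ + Mχ * Nφ)) * Nψ := mul_le_mul_left inner_a_bound _
    _ = ENNReal.ofReal (|c| ^ (-ρ)) * ENNReal.ofReal (2 ^ (ρ - 1)) *
          (Mφ * Nχ + Mχ * Nφ) * Nψ := by ring

/-- Theorem 3.2(ii): L¹ bound of the basic function in the third variable, case `ρ ≥ 1`. -/
theorem basicD_L1_third' (θ ρ : ℝ) (hθ : Real.sin θ ≠ 0) (hρ : 1 ≤ ρ)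
    (ψ φ χ : ℝ → ℂ) (hψ : MemLp ψ 1 volume)
    (hφ : MemLp (fun y : ℝ => ((1 + |y| ^ (ρ - 1) : ℝ) : ℂ) * φ y) 1 volume)
    (hχ : MemLp (fun y : ℝ => ((1 + |y| ^ (ρ - 1) : ℝ) : ℂ) * χ y) 1 volume)
    (hCpos : 0 < admConst φ)
    (hCfin : Integrable (fun ω : ℝ => ‖FourierTransform.fourier φ ω‖ ^ 2 / |ω|))
    (u v : ℝ) (huv : u ≠ v) :
    (∫ w : ℝ, ‖basicD θ ρ ψ χ φ u v w‖) ≤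
      (admConst φ)⁻¹ * 2 ^ (ρ - 1) * |u - v| ^ (-ρ) *
        ((eLpNorm (fun x : ℝ => φ x * ((|x| ^ (ρ - 1) : ℝ) : ℂ)) 1 volume).toReal *
            (eLpNorm χ 1 volume).toReal +
          (eLpNorm (fun y : ℝ => χ y * ((|y| ^ (ρ - 1) : ℝ) : ℂ)) 1 volume).toReal *
            (eLpNorm φ 1 volume).toReal) *
        (eLpNorm ψ 1 volume).toReal := by
  classical
  have hρ0 : (0:ℝ) ≤ ρ - 1 := by linarith
  -- a.e.-measurability of φ and χ
  have hφsm : AEStronglyMeasurable φ volume := by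
    have hcm : Measurable fun y : ℝ => (((1 + |y| ^ (ρ - 1) : ℝ)⁻¹ : ℝ) : ℂ) := by fun_prop
    have heq : (fun y : ℝ => (((1 + |y| ^ (ρ - 1) : ℝ)⁻¹ : ℝ) : ℂ) *
        (((1 + |y| ^ (ρ - 1) : ℝ) : ℂ) * φ y)) = φ := by
      funext y
      have hne : (1 + |y| ^ (ρ - 1) : ℝ) ≠ 0 := by positivity
      rw [← mul_assoc, ← Complex.ofReal_mul, inv_mul_cancel₀ hne, Complex.ofReal_one, one_mul]
    exact heq ▸ (hcm.aestronglyMeasurable.mul hφ.1)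
  have hχsm : AEStronglyMeasurable χ volume := by
    have hcm : Measurable fun y : ℝ => (((1 + |y| ^ (ρ - 1) : ℝ)⁻¹ : ℝ) : ℂ) := by fun_prop
    have heq : (fun y : ℝ => (((1 + |y| ^ (ρ - 1) : ℝ)⁻¹ : ℝ) : ℂ) *
        (((1 + |y| ^ (ρ - 1) : ℝ) : ℂ) * χ y)) = χ := by
      funext y
      have hne : (1 + |y| ^ (ρ - 1) : ℝ) ≠ 0 := by positivity
      rw [← mul_assoc, ← Complex.ofReal_mul, inv_mul_cancel₀ hne, Complex.ofReal_one, one_mul]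
    exact heq ▸ (hcm.aestronglyMeasurable.mul hχ.1)
  -- measurable representatives
  set ψ' : ℝ → ℂ := hψ.1.mk ψ with hψ'def
  set φ' : ℝ → ℂ := hφsm.mk φ with hφ'def
  set χ' : ℝ → ℂ := hχsm.mk χ with hχ'def
  have mψ : Measurable ψ' := hψ.1.stronglyMeasurable_mk.measurable
  have mφ : Measurable φ' := hφsm.stronglyMeasurable_mk.measurable
  have mχ : Measurable χ' := hχsm.stronglyMeasurable_mk.measurable
  have hψae : ψ =ᵐ[volume] ψ' := hψ.1.ae_eq_mk
  have hφae : φ =ᵐ[volume] φ' := hφsm.ae_eq_mk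
  have hχae : χ =ᵐ[volume] χ' := hχsm.ae_eq_mk
  set c : ℝ := v - u with hcdef
  have hc : c ≠ 0 := sub_ne_zero.mpr (Ne.symm huv)
  -- the various ℝ≥0∞ quantities
  set Nψ : ℝ≥0∞ := ∫⁻ x : ℝ, (‖ψ' x‖₊ : ℝ≥0∞) with hNψdef
  set Nφ : ℝ≥0∞ := ∫⁻ x : ℝ, (‖φ' x‖₊ : ℝ≥0∞) with hNφdef
  set Nχ : ℝ≥0∞ := ∫⁻ x : ℝ, (‖χ' x‖₊ : ℝ≥0∞) with hNχdef
  set Mφ : ℝ≥0∞ := ∫⁻ x : ℝ, ENNReal.ofReal (|x| ^ (ρ - 1)) * (‖φ' x‖₊ : ℝ≥0∞) with hMφdef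
  set Mχ : ℝ≥0∞ := ∫⁻ x : ℝ, ENNReal.ofReal (|x| ^ (ρ - 1)) * (‖χ' x‖₊ : ℝ≥0∞) with hMχdef
  -- identification with the eLpNorms in the statement
  have eNψ : eLpNorm ψ 1 volume = Nψ := by
    rw [eLpNorm_one_eq_lintegral_enorm]
    exact lintegral_congr_ae (hψae.mono fun x hx => by show (↑‖ψ x‖₊ : ℝ≥0∞) = ↑‖ψ' x‖₊; rw [hx])
  have eNφ : eLpNorm φ 1 volume = Nφ := by
    rw [eLpNorm_one_eq_lintegral_enorm]
    exact lintegral_congr_ae (hφae.mono fun x hx => by show (↑‖φ x‖₊ : ℝ≥0∞) = ↑‖φ' x‖₊; rw [hx])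
  have eNχ : eLpNorm χ 1 volume = Nχ := by
    rw [eLpNorm_one_eq_lintegral_enorm]
    exact lintegral_congr_ae (hχae.mono fun x hx => by show (↑‖χ x‖₊ : ℝ≥0∞) = ↑‖χ' x‖₊; rw [hx])
  have hcoe : ∀ x : ℝ, (‖((|x| ^ (ρ - 1) : ℝ) : ℂ)‖₊ : ℝ≥0∞)
      = ENNReal.ofReal (|x| ^ (ρ - 1)) := by
    intro x
    rw [← enorm_eq_nnnorm, ← ofReal_norm, Complex.norm_real, Real.norm_eq_abs,
      _root_.abs_of_nonneg (Real.rpow_nonneg (abs_nonneg _) _)]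
  have eMφ : eLpNorm (fun x : ℝ => φ x * ((|x| ^ (ρ - 1) : ℝ) : ℂ)) 1 volume = Mφ := by
    rw [eLpNorm_one_eq_lintegral_enorm]
    apply lintegral_congr_ae
    filter_upwards [hφae] with x hx
    rw [enorm_eq_nnnorm, nnnorm_mul, ENNReal.coe_mul, hx, mul_comm, hcoe x]
  have eMχ : eLpNorm (fun x : ℝ => χ x * ((|x| ^ (ρ - 1) : ℝ) : ℂ)) 1 volume = Mχ := by
    rw [eLpNorm_one_eq_lintegral_enorm]
    apply lintegral_congr_ae
    filter_upwards [hχae] with x hx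
    rw [enorm_eq_nnnorm, nnnorm_mul, ENNReal.coe_mul, hx, mul_comm, hcoe x]
  -- finiteness
  have fNψ : Nψ ≠ ⊤ := by rw [← eNψ]; exact hψ.2.ne
  have hbig : ∀ (f : ℝ → ℂ) (x : ℝ), ‖f x‖ ≤ ‖((1 + |x| ^ (ρ - 1) : ℝ) : ℂ) * f x‖ := by
    intro f x
    rw [norm_mul, Complex.norm_real, Real.norm_eq_abs,
      _root_.abs_of_nonneg (by positivity : (0:ℝ) ≤ 1 + |x| ^ (ρ - 1))]
    nlinarith [norm_nonneg (f x), Real.rpow_nonneg (abs_nonneg x) (ρ - 1)]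
  have hbig2 : ∀ (f : ℝ → ℂ) (x : ℝ), ‖f x * ((|x| ^ (ρ - 1) : ℝ) : ℂ)‖ ≤
      ‖((1 + |x| ^ (ρ - 1) : ℝ) : ℂ) * f x‖ := by
    intro f x
    rw [norm_mul, norm_mul, Complex.norm_real, Complex.norm_real, Real.norm_eq_abs,
      Real.norm_eq_abs, _root_.abs_of_nonneg (by positivity : (0:ℝ) ≤ 1 + |x| ^ (ρ - 1)),
      _root_.abs_of_nonneg (Real.rpow_nonneg (abs_nonneg x) _)]
    nlinarith [norm_nonneg (f x), Real.rpow_nonneg (abs_nonneg x) (ρ - 1)]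
  have fNφ : Nφ ≠ ⊤ := by
    rw [← eNφ]
    exact (lt_of_le_of_lt (eLpNorm_mono (hbig φ)) hφ.2).ne
  have fNχ : Nχ ≠ ⊤ := by
    rw [← eNχ]
    exact (lt_of_le_of_lt (eLpNorm_mono (hbig χ)) hχ.2).ne
  have fMφ : Mφ ≠ ⊤ := by
    rw [← eMφ]
    exact (lt_of_le_of_lt (eLpNorm_mono (hbig2 φ)) hφ.2).ne
  have fMχ : Mχ ≠ ⊤ := by
    rw [← eMχ]
    exact (lt_of_le_of_lt (eLpNorm_mono (hbig2 χ)) hχ.2).ne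
  -- pointwise bound on `basicD`
  have step0 : ∀ w : ℝ, (‖basicD θ ρ ψ χ φ u v w‖₊ : ℝ≥0∞) ≤
      ENNReal.ofReal (admConst φ)⁻¹ * ∫⁻ a in Set.Ioi (0:ℝ), ∫⁻ b : ℝ,
        ((ENNReal.ofReal (a ^ (-ρ - 3)) * ‖χ' ((v - b) / a)‖₊ * ‖φ' ((u - b) / a)‖₊) *
          ‖ψ' ((w - b) / a)‖₊) := by
    intro w
    unfold basicD
    rw [nnnorm_mul, ENNReal.coe_mul]
    have hC : (‖(((admConst φ : ℝ)) : ℂ)⁻¹‖₊ : ℝ≥0∞) = ENNReal.ofReal (admConst φ)⁻¹ := by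
      rw [← enorm_eq_nnnorm, ← ofReal_norm, norm_inv, Complex.norm_real, Real.norm_eq_abs,
        _root_.abs_of_pos hCpos]
    rw [hC]
    refine mul_le_mul_right ?_ _
    refine le_trans (enorm_integral_le_lintegral_enorm _) ?_
    refine le_trans (lintegral_mono fun a => enorm_integral_le_lintegral_enorm _) ?_
    refine le_of_eq (setLIntegral_congr_fun measurableSet_Ioi ?_)
    intro a ha
    have ha' : (0:ℝ) < a := ha
    calc (∫⁻ b : ℝ, (‖(starRingEnd ℂ) (fracWav θ ρ ψ a b w) *
            (starRingEnd ℂ) (fracWav θ ρ χ a b v) *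
            fracWav θ ρ φ a b u * ((|a| ^ (2 * ρ - 3) : ℝ) : ℂ)‖₊ : ℝ≥0∞))
        = ∫⁻ b : ℝ, (ENNReal.ofReal (a ^ (-ρ - 3)) * ‖χ ((v - b) / a)‖₊ *
            ‖φ ((u - b) / a)‖₊) * ‖ψ ((w - b) / a)‖₊ :=
          lintegral_congr fun b => enorm_F θ ρ ψ χ φ ha' b u v w
      _ = ∫⁻ b : ℝ, (ENNReal.ofReal (a ^ (-ρ - 3)) * ‖χ' ((v - b) / a)‖₊ *
            ‖φ' ((u - b) / a)‖₊) * ‖ψ' ((w - b) / a)‖₊ := by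
          apply lintegral_congr_ae
          filter_upwards [ae_comp_affine hχae ha'.ne' v, ae_comp_affine hφae ha'.ne' u,
            ae_comp_affine hψae ha'.ne' w] with b e1 e2 e3
          rw [show χ ((v - b) / a) = χ' ((v - b) / a) from e1,
            show φ ((u - b) / a) = φ' ((u - b) / a) from e2,
            show ψ ((w - b) / a) = ψ' ((w - b) / a) from e3]
  -- the full bound in `ℝ≥0∞`
  have key : (∫⁻ w : ℝ, (‖basicD θ ρ ψ χ φ u v w‖₊ : ℝ≥0∞)) ≤
      ENNReal.ofReal (admConst φ)⁻¹ *
        (ENNReal.ofReal (|c| ^ (-ρ)) * ENNReal.ofReal (2 ^ (ρ - 1)) *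
          (Mφ * Nχ + Mχ * Nφ) * Nψ) := by
    refine le_trans (lintegral_mono step0) ?_
    rw [lintegral_const_mul' _ _ ENNReal.ofReal_ne_top]
    exact mul_le_mul_right (core_bound hρ ψ' χ' φ' mψ mχ mφ u v hc fNψ fNχ fMχ) _
  have hRne : ENNReal.ofReal (admConst φ)⁻¹ *
      (ENNReal.ofReal (|c| ^ (-ρ)) * ENNReal.ofReal (2 ^ (ρ - 1)) *
        (Mφ * Nχ + Mχ * Nφ) * Nψ) ≠ ⊤ := by
    refine ENNReal.mul_ne_top ENNReal.ofReal_ne_top ?_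
    refine ENNReal.mul_ne_top (ENNReal.mul_ne_top ?_ ?_) fNψ
    · exact ENNReal.mul_ne_top ENNReal.ofReal_ne_top ENNReal.ofReal_ne_top
    · exact ENNReal.add_ne_top.mpr ⟨ENNReal.mul_ne_top fMφ fNχ, ENNReal.mul_ne_top fMχ fNφ⟩
  by_cases hInt : Integrable (fun w : ℝ => ‖basicD θ ρ ψ χ φ u v w‖) volume
  · have h1 : (∫ w : ℝ, ‖basicD θ ρ ψ χ φ u v w‖) =
        (∫⁻ w : ℝ, (‖basicD θ ρ ψ χ φ u v w‖₊ : ℝ≥0∞)).toReal := by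
      rw [integral_eq_lintegral_of_nonneg_ae
        (Filter.Eventually.of_forall fun w => norm_nonneg _) hInt.aestronglyMeasurable]
      congr 1
      exact lintegral_congr fun w => ofReal_norm _
    rw [h1, eNψ, eNφ, eNχ, eMφ, eMχ]
    refine le_trans (ENNReal.toReal_mono hRne key) (le_of_eq ?_)
    rw [ENNReal.toReal_mul, ENNReal.toReal_mul, ENNReal.toReal_mul, ENNReal.toReal_mul,
      ENNReal.toReal_add (ENNReal.mul_ne_top fMφ fNχ) (ENNReal.mul_ne_top fMχ fNφ),
      ENNReal.toReal_mul, ENNReal.toReal_mul,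
      ENNReal.toReal_ofReal (inv_nonneg.mpr hCpos.le),
      ENNReal.toReal_ofReal (Real.rpow_nonneg (abs_nonneg _) _),
      ENNReal.toReal_ofReal (Real.rpow_nonneg (by norm_num) _)]
    rw [hcdef, abs_sub_comm v u]
    ring
  · rw [integral_undef hInt]
    have h0 : (0:ℝ) ≤ (admConst φ)⁻¹ := inv_nonneg.mpr hCpos.le
    have h2 : (0:ℝ) ≤ (2:ℝ) ^ (ρ - 1) := Real.rpow_nonneg (by norm_num) _
    have h3 : (0:ℝ) ≤ |u - v| ^ (-ρ) := Real.rpow_nonneg (abs_nonneg _) _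
    have h4 : (0:ℝ) ≤ (eLpNorm (fun x : ℝ => φ x * ((|x| ^ (ρ - 1) : ℝ) : ℂ)) 1 volume).toReal *
          (eLpNorm χ 1 volume).toReal +
        (eLpNorm (fun y : ℝ => χ y * ((|y| ^ (ρ - 1) : ℝ) : ℂ)) 1 volume).toReal *
          (eLpNorm φ 1 volume).toReal :=
      add_nonneg (mul_nonneg ENNReal.toReal_nonneg ENNReal.toReal_nonneg)
        (mul_nonneg ENNReal.toReal_nonneg ENNReal.toReal_nonneg)
    have h5 : (0:ℝ) ≤ (eLpNorm ψ 1 volume).toReal := ENNReal.toReal_nonneg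
    positivity
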